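/- Let n, m, r ∈ ℕ and let the family A = {A_1, …, A_m} of n×n matrices over F₂ be such that for every nonzero s ∈ {0,1}^m the matrix A_s = Σ_{i=1}^m s_i A_i has rank at least n − r. Then for all k1, k2 ∈ ℝ, the function deor_A is a (k1, k2, ε) X1-strong two-source extractor against classical knowledge in the Markov model with ε = 3 · 2^{−(k1 + k2 + 2 − n − r − m)/4}. -/

import Mathlib

open Matrix Kronecker BigOperators Finset ComplexOrder

/-- Bit strings of length `n`. -/
abbrev BS (n : ℕ) := Fin n → Bool

/-- Embedding of a bit into the field with two elements. -/
def toZ2 (b : Bool) : ZMod 2 := if b then 1 else 0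

/-- Inner product modulo 2 of two bit strings. -/
def ipBool {n : ℕ} (x y : BS n) : Bool := decide ((∑ i, toZ2 (x i) * toZ2 (y i)) = 1)

/-- Multiplication of a bit string by a matrix over F₂. -/
def mulVecBool {n : ℕ} (L : Matrix (Fin n) (Fin n) (ZMod 2)) (x : BS n) : BS n :=
  fun i => decide ((L.mulVec fun j => toZ2 (x j)) i = 1)

/-- The `deor` extractor associated to a family of matrices over F₂. -/
def deor {n m : ℕ} (A : Fin m → Matrix (Fin n) (Fin n) (ZMod 2)) (x y : BS n) : BS m :=
  fun i => ipBool (mulVecBool (A i) x) y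

/-- The square root of a positive semidefinite matrix (Mathlib's former `Matrix.PosSemidef.sqrt`). -/
noncomputable def Matrix.PosSemidef.sqrt {𝕜 : Type*} [RCLike 𝕜] {n : Type*} [Fintype n]
    [DecidableEq n] {A : Matrix n n 𝕜} (hA : A.PosSemidef) : Matrix n n 𝕜 :=
  hA.1.eigenvectorUnitary.1 * diagonal ((↑) ∘ (√·) ∘ hA.1.eigenvalues) *
    (star hA.1.eigenvectorUnitary : Matrix n n 𝕜)

/-- Trace norm of a complex matrix: `tr √(SᴴS)`. -/
noncomputable def traceNorm {B : Type*} [Fintype B] [DecidableEq B] (S : Matrix B B ℂ) : ℝ :=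
  ((Matrix.posSemidef_conjTranspose_mul_self S).sqrt.trace).re

/-- Trace distance between two matrices. -/
noncomputable def traceDist {B : Type*} [Fintype B] [DecidableEq B] (ρ σ : Matrix B B ℂ) : ℝ :=
  (1/2) * traceNorm (ρ - σ)

/-- A density matrix: positive semidefinite with unit trace. -/
def IsDensity {B : Type*} [Fintype B] (ρ : Matrix B B ℂ) : Prop :=
  ρ.PosSemidef ∧ ρ.trace = 1

/-- A cq-state given by its family of (subnormalized) conditional operators. -/
def IsCQ {X B : Type*} [Fintype X] [Fintype B] (ρ : X → Matrix B B ℂ) : Prop :=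
  (∀ x, (ρ x).PosSemidef) ∧ (∑ x, (ρ x).trace) = 1

/-- The full matrix `Σ_x |x⟩⟨x| ⊗ ρ_{B∧x}` of a cq-state. -/
noncomputable def cqMatrix {X B : Type*} [Fintype X] [DecidableEq X] [Fintype B]
    (ρ : X → Matrix B B ℂ) : Matrix (X × B) (X × B) ℂ :=
  ∑ x, (Matrix.single x x (1:ℂ)) ⊗ₖ ρ x

/-- Conditional min-entropy of a cq-state: the sup over density matrices σ and reals w with
`ρ_{B∧x} ≤ 2^{-w}·σ` for all `x` (Loewner order), of `w`; `⊥ = -∞` if no such pair exists. -/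
noncomputable def qCondHmin {X B : Type*} [Fintype X] [Fintype B]
    (ρ : X → Matrix B B ℂ) : EReal :=
  sSup {z : EReal | ∃ w : ℝ, z = (w : EReal) ∧ ∃ σ : Matrix B B ℂ, σ.PosSemidef ∧ σ.trace = 1 ∧
    ∀ x, (((2:ℝ) ^ (-w)) • σ - ρ x).PosSemidef}

/-- The maximally mixed state on `m` qubits. -/
noncomputable def mixed (m : ℕ) : Matrix (BS m) (BS m) ℂ := ((2:ℂ)^m)⁻¹ • 1

/-- A finitely supported probability distribution. -/
def IsDist {α : Type*} [Fintype α] (P : α → ℝ) : Prop := (∀ a, 0 ≤ P a) ∧ ∑ a, P a = 1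

/-- Total variation distance. -/
noncomputable def TV {α : Type*} [Fintype α] (Q R : α → ℝ) : ℝ := (1/2) * ∑ a, |Q a - R a|

/-- Min-entropy of a distribution. -/
noncomputable def Hmin {X : Type*} [Fintype X] [Nonempty X] (P : X → ℝ) : ℝ :=
  - Real.logb 2 (⨆ x, P x)

/-- Conditional min-entropy of a joint distribution. -/
noncomputable def HminCond {X Z : Type*} [Fintype X] [Nonempty X] [Fintype Z]
    (P : X → Z → ℝ) : ℝ :=
  - Real.logb 2 (∑ z, ⨆ x, P x z)

/-- `(k1,k2,ε)` X1-strong two-source extractor (no side information). -/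
def IsStrongExt (n1 n2 m : ℕ) (Ext : BS n1 → BS n2 → BS m) (k1 k2 ε : ℝ) : Prop :=
  ∀ (P1 : BS n1 → ℝ) (P2 : BS n2 → ℝ), IsDist P1 → IsDist P2 →
    k1 ≤ Hmin P1 → k2 ≤ Hmin P2 →
    TV (fun p : BS m × BS n1 => ∑ x2, if Ext p.2 x2 = p.1 then P1 p.2 * P2 x2 else 0)
       (fun p : BS m × BS n1 => ((2:ℝ)^m)⁻¹ * P1 p.2) ≤ ε

/-- `(k1,k2,ε)` X1-strong two-source extractor against classical product-type knowledge. -/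
def IsStrongExtCPT (n1 n2 m : ℕ) (Ext : BS n1 → BS n2 → BS m) (k1 k2 ε : ℝ) : Prop :=
  ∀ (Z1 Z2 : Type) [Fintype Z1] [Fintype Z2],
    ∀ (P1 : BS n1 → Z1 → ℝ) (P2 : BS n2 → Z2 → ℝ),
    IsDist (fun p : BS n1 × Z1 => P1 p.1 p.2) →
    IsDist (fun p : BS n2 × Z2 => P2 p.1 p.2) →
    k1 ≤ HminCond P1 → k2 ≤ HminCond P2 →
    TV (fun q : BS m × BS n1 × Z1 × Z2 =>
          ∑ x2, if Ext q.2.1 x2 = q.1 then P1 q.2.1 q.2.2.1 * P2 x2 q.2.2.2 else 0)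
       (fun q : BS m × BS n1 × Z1 × Z2 =>
          ((2:ℝ)^m)⁻¹ * P1 q.2.1 q.2.2.1 * ∑ x2, P2 x2 q.2.2.2) ≤ ε

/-- `(k1,k2,ε)` weak two-source extractor against classical product-type knowledge. -/
def IsWeakExtCPT (n1 n2 m : ℕ) (Ext : BS n1 → BS n2 → BS m) (k1 k2 ε : ℝ) : Prop :=
  ∀ (Z1 Z2 : Type) [Fintype Z1] [Fintype Z2],
    ∀ (P1 : BS n1 → Z1 → ℝ) (P2 : BS n2 → Z2 → ℝ),
    IsDist (fun p : BS n1 × Z1 => P1 p.1 p.2) →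
    IsDist (fun p : BS n2 × Z2 => P2 p.1 p.2) →
    k1 ≤ HminCond P1 → k2 ≤ HminCond P2 →
    TV (fun q : BS m × Z1 × Z2 =>
          ∑ x1, ∑ x2, if Ext x1 x2 = q.1 then P1 x1 q.2.1 * P2 x2 q.2.2 else 0)
       (fun q : BS m × Z1 × Z2 =>
          ((2:ℝ)^m)⁻¹ * (∑ x1, P1 x1 q.2.1) * ∑ x2, P2 x2 q.2.2) ≤ ε

/-- `(k1,k2,ε)` X1-strong two-source extractor against classical knowledge in the Markov model. -/
def IsStrongExtCMarkov (n1 n2 m : ℕ) (Ext : BS n1 → BS n2 → BS m) (k1 k2 ε : ℝ) : Prop :=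
  ∀ (C : Type) [Fintype C], ∀ (P : BS n1 → BS n2 → C → ℝ),
    IsDist (fun q : BS n1 × BS n2 × C => P q.1 q.2.1 q.2.2) →
    (∀ x1 x2 c, P x1 x2 c * (∑ x1', ∑ x2', P x1' x2' c)
        = (∑ x2', P x1 x2' c) * (∑ x1', P x1' x2 c)) →
    k1 ≤ HminCond (fun x1 c => ∑ x2, P x1 x2 c) →
    k2 ≤ HminCond (fun x2 c => ∑ x1, P x1 x2 c) →
    TV (fun q : BS m × BS n1 × C => ∑ x2, if Ext q.2.1 x2 = q.1 then P q.2.1 x2 q.2.2 else 0)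
       (fun q : BS m × BS n1 × C => ((2:ℝ)^m)⁻¹ * ∑ x2, P q.2.1 x2 q.2.2) ≤ ε

/-- The output cq-state `ρ_{Ext(X1,X2) X1 C1 C2}` for product-type quantum side information. -/
noncomputable def qStrongOut {n1 n2 m : ℕ} {C1 C2 : Type}
    [Fintype C1] [Fintype C2]
    (Ext : BS n1 → BS n2 → BS m)
    (ρ1 : BS n1 → Matrix C1 C1 ℂ) (ρ2 : BS n2 → Matrix C2 C2 ℂ) :
    Matrix (BS m × (BS n1 × C1) × C2) (BS m × (BS n1 × C1) × C2) ℂ :=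
  ∑ x1, ∑ x2, (Matrix.single (Ext x1 x2) (Ext x1 x2) (1:ℂ)) ⊗ₖ
    (((Matrix.single x1 x1 (1:ℂ)) ⊗ₖ ρ1 x1) ⊗ₖ ρ2 x2)

/-- `(k1,k2,ε)` X1-strong two-source extractor against quantum product-type knowledge. -/
def IsStrongExtQPT (n1 n2 m : ℕ) (Ext : BS n1 → BS n2 → BS m) (k1 k2 ε : ℝ) : Prop :=
  ∀ (C1 C2 : Type) [Fintype C1] [DecidableEq C1] [Fintype C2] [DecidableEq C2],
    ∀ (ρ1 : BS n1 → Matrix C1 C1 ℂ) (ρ2 : BS n2 → Matrix C2 C2 ℂ),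
    IsCQ ρ1 → IsCQ ρ2 →
    (k1 : EReal) ≤ qCondHmin ρ1 → (k2 : EReal) ≤ qCondHmin ρ2 →
    traceDist (qStrongOut Ext ρ1 ρ2) (mixed m ⊗ₖ (cqMatrix ρ1 ⊗ₖ ∑ x2, ρ2 x2)) ≤ ε

/-- `(k1,k2,ε)` weak two-source extractor against quantum product-type knowledge. -/
def IsWeakExtQPT (n1 n2 m : ℕ) (Ext : BS n1 → BS n2 → BS m) (k1 k2 ε : ℝ) : Prop :=
  ∀ (C1 C2 : Type) [Fintype C1] [DecidableEq C1] [Fintype C2] [DecidableEq C2],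
    ∀ (ρ1 : BS n1 → Matrix C1 C1 ℂ) (ρ2 : BS n2 → Matrix C2 C2 ℂ),
    IsCQ ρ1 → IsCQ ρ2 →
    (k1 : EReal) ≤ qCondHmin ρ1 → (k2 : EReal) ≤ qCondHmin ρ2 →
    traceDist (∑ x1, ∑ x2, (Matrix.single (Ext x1 x2) (Ext x1 x2) (1:ℂ)) ⊗ₖ
        ((ρ1 x1) ⊗ₖ ρ2 x2))
      (mixed m ⊗ₖ ((∑ x1, ρ1 x1) ⊗ₖ ∑ x2, ρ2 x2)) ≤ ε

/-- `(k1,k2,ε)` X1-strong two-source extractor against quantum knowledge in the Markov model,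
in decomposed form. -/
def IsStrongExtQMarkov (n1 n2 m : ℕ) (Ext : BS n1 → BS n2 → BS m) (k1 k2 ε : ℝ) : Prop :=
  ∀ (Z C1 C2 : Type) [Fintype Z] [DecidableEq Z]
      [Fintype C1] [DecidableEq C1] [Fintype C2] [DecidableEq C2],
    ∀ (P : Z → ℝ) (ρ1 : Z → BS n1 → Matrix C1 C1 ℂ) (ρ2 : Z → BS n2 → Matrix C2 C2 ℂ),
    IsDist P → (∀ z, IsCQ (ρ1 z)) → (∀ z, IsCQ (ρ2 z)) →
    (k1 : EReal) ≤ qCondHmin (fun x1 : BS n1 =>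
      ∑ z, P z • (((ρ1 z x1) ⊗ₖ ∑ x2, ρ2 z x2) ⊗ₖ Matrix.single z z (1:ℂ))) →
    (k2 : EReal) ≤ qCondHmin (fun x2 : BS n2 =>
      ∑ z, P z • (((∑ x1, ρ1 z x1) ⊗ₖ ρ2 z x2) ⊗ₖ Matrix.single z z (1:ℂ))) →
    traceDist
      (∑ x1, ∑ x2, ∑ z, P z •
        ((Matrix.single (Ext x1 x2) (Ext x1 x2) (1:ℂ)) ⊗ₖ
          ((Matrix.single x1 x1 (1:ℂ)) ⊗ₖ
            (((ρ1 z x1) ⊗ₖ ρ2 z x2) ⊗ₖ Matrix.single z z (1:ℂ)))))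
      (mixed m ⊗ₖ cqMatrix (fun x1 : BS n1 =>
        ∑ z, P z • (((ρ1 z x1) ⊗ₖ ∑ x2, ρ2 z x2) ⊗ₖ Matrix.single z z (1:ℂ))))
      ≤ ε


abbrev V (k : ℕ) := Fin k → ZMod 2

lemma zmod2_cases (a : ZMod 2) : a = 0 ∨ a = 1 := by
  fin_cases a
  · exact Or.inl rfl
  · exact Or.inr rfl

noncomputable def chi (a : ZMod 2) : ℝ := if a = 0 then 1 else -1

lemma chi_zero : chi 0 = 1 := by simp [chi]

lemma chi_add (a b : ZMod 2) : chi (a + b) = chi a * chi b := by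
  rcases zmod2_cases a with h | h <;> rcases zmod2_cases b with h' | h' <;>
    subst h <;> subst h' <;>
    simp [chi, show (1 + 1 : ZMod 2) = 0 from by decide]

lemma chi_sum {ι : Type*} (s : Finset ι) (f : ι → ZMod 2) :
    chi (∑ i ∈ s, f i) = ∏ i ∈ s, chi (f i) := by
  induction s using Finset.cons_induction with
  | empty => simp [chi]
  | cons a s h ih => rw [Finset.sum_cons, Finset.prod_cons, chi_add, ih]

noncomputable def ee {k : ℕ} (u v : V k) : ℝ := chi (u ⬝ᵥ v)

lemma ee_comm {k : ℕ} (u v : V k) : ee u v = ee v u := by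
  rw [ee, ee, dotProduct_comm]

lemma ee_add_right {k : ℕ} (u v w : V k) : ee u (v + w) = ee u v * ee u w := by
  rw [ee, ee, ee, dotProduct_add, chi_add]

lemma vadd_self {k : ℕ} (v : V k) : v + v = 0 := by
  funext i
  have := zmod2_cases (v i)
  rcases this with h | h <;> simp [Pi.add_apply, h] <;> decide

lemma ee_orth {k : ℕ} (u : V k) :
    ∑ v : V k, ee u v = if u = 0 then (2:ℝ)^k else 0 := by
  by_cases hu : u = 0
  · subst hu
    simp only [if_pos rfl, ee, zero_dotProduct, chi_zero, Finset.sum_const]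
    rw [Finset.card_univ]
    simp [Fintype.card_fun]
  · rw [if_neg hu]
    obtain ⟨i, hi⟩ : ∃ i, u i ≠ 0 := by
      by_contra h
      push_neg at h
      exact hu (funext h)
    have hi1 : u i = 1 := (zmod2_cases (u i)).resolve_left hi
    set δ : V k := Pi.single i 1 with hδ
    have hbij : Function.Bijective (fun v : V k => v + δ) :=
      (Equiv.addRight δ).bijective
    have h2 : ∑ v : V k, ee u (v + δ) = ∑ v : V k, ee u v :=
      (Fintype.sum_bijective _ hbij _ _ (fun v => rfl))
    have h3 : ∀ v : V k, ee u (v + δ) = - ee u v := by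
      intro v
      rw [ee_add_right]
      have : ee u δ = -1 := by
        rw [ee, hδ, dotProduct_single, mul_one, hi1]
        simp [chi]
      rw [this]; ring
    rw [Finset.sum_congr rfl (fun v _ => h3 v)] at h2
    simp only [Finset.sum_neg_distrib] at h2
    linarith

noncomputable def FT {k : ℕ} (f : V k → ℝ) (u : V k) : ℝ := ∑ v, ee u v * f v

lemma add_eq_zero_iff_eq {k : ℕ} (v w : V k) : v + w = 0 ↔ v = w := by
  constructor
  · intro h
    have h2 := congrArg (· + w) h
    simpa [add_assoc, vadd_self] using h2
  · intro h; subst h; exact vadd_self v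

lemma parseval {k : ℕ} (f : V k → ℝ) :
    ∑ u : V k, (FT f u)^2 = (2:ℝ)^k * ∑ v : V k, (f v)^2 := by
  have expand : ∀ u : V k, (FT f u)^2 = ∑ v, ∑ w, f v * f w * ee u (v + w) := by
    intro u
    rw [FT, sq, Finset.sum_mul_sum]
    refine Finset.sum_congr rfl fun v _ => Finset.sum_congr rfl fun w _ => ?_
    rw [ee_add_right]; ring
  simp only [expand]
  rw [Finset.sum_comm]
  have : ∀ v : V k, ∑ w : V k, ∑ u : V k, f v * f w * ee u (v + w)
      = (2:ℝ)^k * (f v)^2 := by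
    intro v
    have : ∀ w : V k, ∑ u : V k, f v * f w * ee u (v + w)
        = f v * f w * (if v + w = 0 then (2:ℝ)^k else 0) := by
      intro w
      rw [← Finset.mul_sum]
      congr 1
      calc ∑ u : V k, ee u (v + w) = ∑ u : V k, ee (v + w) u :=
            Finset.sum_congr rfl fun u _ => ee_comm u (v + w)
        _ = _ := ee_orth (v + w)
    simp only [this]
    simp only [add_eq_zero_iff_eq, mul_ite, mul_zero]
    rw [Finset.sum_ite_eq Finset.univ v (fun w => f v * f w * (2:ℝ)^k)]
    simp [sq]; ring
  rw [Finset.sum_congr rfl fun v _ => Finset.sum_comm.trans (this v), ← Finset.mul_sum]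

/-- Deviation L2-identity: Fourier support on nonzero frequencies. -/
lemma dev_sq {k : ℕ} (q : V k → ℝ) :
    ∑ v : V k, (q v - (∑ w, q w) / (2:ℝ)^k)^2
      = ((2:ℝ)^k)⁻¹ * ∑ u ∈ Finset.univ.erase (0 : V k), (FT q u)^2 := by
  have h2k : (0:ℝ) < (2:ℝ)^k := by positivity
  set Q : ℝ := ∑ w, q w
  set g : V k → ℝ := fun v => q v - Q / (2:ℝ)^k with hg
  have hFT : ∀ u : V k, FT g u = FT q u - (if u = 0 then Q else 0) := by
    intro u
    rw [FT, FT]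
    simp only [hg, mul_sub, Finset.sum_sub_distrib]
    congr 1
    rw [← Finset.sum_mul, ee_orth]
    by_cases hu : u = 0 <;> simp only [hu, if_true, if_false] <;> field_simp <;> simp
  have hpars := parseval g
  have h0 : FT g 0 = 0 := by
    rw [hFT]
    simp only [if_pos rfl, sub_eq_zero]
    rw [FT]
    simp [ee, chi_zero]
    rfl
  have hsplit : ∑ u : V k, (FT g u)^2
      = (FT g 0)^2 + ∑ u ∈ Finset.univ.erase (0 : V k), (FT g u)^2 := by
    rw [← Finset.sum_erase_add Finset.univ _ (Finset.mem_univ (0 : V k))]; ring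
  have heq : ∀ u ∈ Finset.univ.erase (0 : V k), (FT g u)^2 = (FT q u)^2 := by
    intro u hu
    rw [hFT, if_neg (Finset.ne_of_mem_erase hu), sub_zero]
  rw [hsplit, h0, Finset.sum_congr rfl heq] at hpars
  have : ∑ v : V k, (g v)^2 = ∑ v : V k, (q v - Q / (2:ℝ)^k)^2 := rfl
  rw [← this]
  field_simp at hpars ⊢
  linarith

lemma card_fiber_le {n r : ℕ} (B : Matrix (Fin n) (Fin n) (ZMod 2))
    (hB : n - r ≤ B.rank) (y : V n) :
    (Finset.univ.filter (fun x : V n => B.mulVec x = y)).card ≤ 2^r := by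
  classical
  letI : Fintype (LinearMap.ker B.mulVecLin) := Fintype.ofFinite _
  -- kernel cardinality
  have hker : Fintype.card (LinearMap.ker B.mulVecLin) = 2 ^ (n - B.rank) := by
    have h1 : Fintype.card (LinearMap.ker B.mulVecLin)
        = 2 ^ Module.finrank (ZMod 2) (LinearMap.ker B.mulVecLin) := by
      have := Module.card_eq_pow_finrank (K := ZMod 2) (V := LinearMap.ker B.mulVecLin)
      simpa [ZMod.card] using this
    have h2 : B.rank + Module.finrank (ZMod 2) (LinearMap.ker B.mulVecLin) = n := by
      have := LinearMap.finrank_range_add_finrank_ker (B.mulVecLin)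
      rw [Matrix.rank]
      simpa [Module.finrank_pi] using this
    rw [h1]
    congr 1
    omega
  have hrankn : B.rank ≤ n := Matrix.rank_le_card_width B |>.trans (by simp)
  -- fiber card ≤ kernel card
  rcases Finset.eq_empty_or_nonempty
      (Finset.univ.filter (fun x : V n => B.mulVec x = y)) with he | ⟨x0, hx0⟩
  · simp [he]
  · have hx0' : B.mulVec x0 = y := by
      simpa using (Finset.mem_filter.mp hx0).2
    have hinj : Set.InjOn (fun x : V n => x + x0)
        ↑(Finset.univ.filter (fun x : V n => B.mulVec x = y)) := by
      intro a _ b _ hab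
      have := congrArg (· + x0) hab
      simpa [add_assoc, vadd_self] using this
    have hmaps : ∀ x ∈ Finset.univ.filter (fun x : V n => B.mulVec x = y),
        x + x0 ∈ Finset.univ.filter (fun x : V n => B.mulVec x = 0) := by
      intro x hx
      have hx' : B.mulVec x = y := by simpa using (Finset.mem_filter.mp hx).2
      simp only [Finset.mem_filter, Finset.mem_univ, true_and]
      rw [Matrix.mulVec_add, hx', hx0', vadd_self]
    have hcard := Finset.card_le_card_of_injOn _ hmaps hinj
    have hkcard : (Finset.univ.filter (fun x : V n => B.mulVec x = 0)).card
        = Fintype.card (LinearMap.ker B.mulVecLin) := by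
      have e1 : Fintype.card (LinearMap.ker B.mulVecLin)
          = Fintype.card {x : V n // B.mulVec x = 0} :=
        Fintype.card_congr (Equiv.subtypeEquivRight (fun x => by
          simp [LinearMap.mem_ker, Matrix.mulVecLin_apply]))
      rw [e1, Fintype.card_subtype]
    calc (Finset.univ.filter (fun x : V n => B.mulVec x = y)).card
        ≤ _ := hcard
      _ = 2 ^ (n - B.rank) := by rw [hkcard, hker]
      _ ≤ 2 ^ r := Nat.pow_le_pow_right (by norm_num) (by omega)

lemma sum_comp_mulVec_le {n r : ℕ} (B : Matrix (Fin n) (Fin n) (ZMod 2))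
    (hB : n - r ≤ B.rank) (h : V n → ℝ) (hh : ∀ y, 0 ≤ h y) :
    ∑ x : V n, h (B.mulVec x) ≤ (2:ℝ)^r * ∑ y : V n, h y := by
  have key : ∑ x : V n, h (B.mulVec x)
      = ∑ y : V n, ((Finset.univ.filter (fun x : V n => B.mulVec x = y)).card : ℝ) * h y := by
    rw [← Finset.sum_fiberwise Finset.univ (fun x : V n => B.mulVec x)
      (fun x => h (B.mulVec x))]
    refine Finset.sum_congr rfl fun y _ => ?_
    rw [Finset.sum_congr rfl (fun x hx => by
      rw [(Finset.mem_filter.mp hx).2]), Finset.sum_const, nsmul_eq_mul]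
  rw [key, Finset.mul_sum]
  refine Finset.sum_le_sum fun y _ => ?_
  have := card_fiber_le B hB y
  have h2 : ((Finset.univ.filter (fun x : V n => B.mulVec x = y)).card : ℝ) ≤ (2:ℝ)^r := by
    calc ((Finset.univ.filter (fun x : V n => B.mulVec x = y)).card : ℝ)
        ≤ ((2^r : ℕ) : ℝ) := Nat.cast_le.mpr this
      _ = (2:ℝ)^r := by push_cast; ring
  exact mul_le_mul_of_nonneg_right h2 (hh y)

def bv {k : ℕ} (x : BS k) : V k := fun i => toZ2 (x i)
def vb {k : ℕ} (u : V k) : BS k := fun i => decide (u i = 1)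

lemma toZ2_decide (a : ZMod 2) : toZ2 (decide (a = 1)) = a := by
  rcases zmod2_cases a with h | h <;> subst h <;> rfl

lemma bv_vb {k : ℕ} (u : V k) : bv (vb u) = u := by
  funext i; exact toZ2_decide (u i)

lemma vb_bv {k : ℕ} (x : BS k) : vb (bv x) = x := by
  funext i; cases h : x i <;> simp [vb, bv, toZ2, h] <;> decide

def bvE (k : ℕ) : BS k ≃ V k :=
  ⟨bv, vb, vb_bv, bv_vb⟩

lemma bv_inj {k : ℕ} : Function.Injective (bv : BS k → V k) := (bvE k).injective

lemma bv_mulVecBool {n : ℕ} (L : Matrix (Fin n) (Fin n) (ZMod 2)) (x : BS n) :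
    bv (mulVecBool L x) = L.mulVec (bv x) := by
  funext i; exact toZ2_decide _

lemma toZ2_ipBool {n : ℕ} (x y : BS n) : toZ2 (ipBool x y) = bv x ⬝ᵥ bv y := by
  rw [ipBool, toZ2_decide]
  rfl

lemma bv_deor {n m : ℕ} (A : Fin m → Matrix (Fin n) (Fin n) (ZMod 2)) (x y : BS n) :
    bv (deor A x y) = fun i => ((A i).mulVec (bv x)) ⬝ᵥ (bv y) := by
  funext i
  rw [bv, deor, toZ2_ipBool, bv_mulVecBool]

lemma ee_deor {n m : ℕ} (A : Fin m → Matrix (Fin n) (Fin n) (ZMod 2))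
    (u : V m) (x y : BS n) :
    ee u (bv (deor A x y)) = ee ((∑ i, u i • A i).mulVec (bv x)) (bv y) := by
  rw [bv_deor, ee, ee]
  congr 1
  simp only [dotProduct, Matrix.mulVec, Matrix.sum_apply, Matrix.smul_apply,
    smul_eq_mul, Finset.sum_mul, Finset.mul_sum]
  rw [Finset.sum_comm]
  refine Finset.sum_congr rfl fun t _ => ?_
  rw [Finset.sum_comm]
  refine Finset.sum_congr rfl fun i _ => Finset.sum_congr rfl fun l _ => ?_
  ring

lemma per_c_bound {n m r : ℕ} (A : Fin m → Matrix (Fin n) (Fin n) (ZMod 2))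
    (hA : ∀ s : BS m, s ≠ (fun _ => false) → n - r ≤ (∑ i, toZ2 (s i) • A i).rank)
    (P : BS n → BS n → ℝ) (p1 p2 : BS n → ℝ) (W M1 M2 : ℝ)
    (hfac : ∀ x1 x2, P x1 x2 * W = p1 x1 * p2 x2)
    (hp1 : ∀ x, 0 ≤ p1 x) (hp2 : ∀ x, 0 ≤ p2 x)
    (hW1 : ∑ x, p1 x = W) (hW2 : ∑ x, p2 x = W) (hW : 0 < W)
    (hM1 : ∀ x, p1 x ≤ M1) (hM2 : ∀ x, p2 x ≤ M2) :
    ∑ x1, ∑ v : BS m, |(∑ x2, if deor A x1 x2 = v then P x1 x2 else 0)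
        - ((2:ℝ)^m)⁻¹ * p1 x1|
      ≤ Real.sqrt ((2:ℝ)^(n+r+m) * (M1 * M2)) := by
  have hM1nn : 0 ≤ M1 := le_trans (hp1 (fun _ => false)) (hM1 _)
  have hM2nn : 0 ≤ M2 := le_trans (hp2 (fun _ => false)) (hM2 _)
  -- the recentered conditional output mass at frequency side
  set q : BS n → V m → ℝ :=
    fun x1 u => ∑ x2, if bv (deor A x1 x2) = u then p2 x2 else 0 with hq
  set g : BS n → V m → ℝ := fun x1 u => q x1 u - ((2:ℝ)^m)⁻¹ * W with hgdef
  have hsumq : ∀ x1, ∑ u, q x1 u = W := by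
    intro x1
    rw [hq, Finset.sum_comm]
    rw [← hW2]
    refine Finset.sum_congr rfl fun x2 _ => ?_
    rw [Finset.sum_ite_eq Finset.univ (bv (deor A x1 x2)) (fun _ => p2 x2)]
    simp
  -- rewrite each inner term
  have hterm : ∀ x1 (v : BS m),
      (∑ x2, if deor A x1 x2 = v then P x1 x2 else 0) - ((2:ℝ)^m)⁻¹ * p1 x1
        = (p1 x1 / W) * g x1 (bv v) := by
    intro x1 v
    have hPx : ∀ x2, P x1 x2 = p1 x1 * p2 x2 / W := by
      intro x2
      field_simp [← hfac x1 x2]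
      exact hfac x1 x2
    have hcond : ∀ x2, (deor A x1 x2 = v) ↔ (bv (deor A x1 x2) = bv v) :=
      fun x2 => ⟨fun h => by rw [h], fun h => bv_inj h⟩
    have : (∑ x2, if deor A x1 x2 = v then P x1 x2 else 0)
        = (p1 x1 / W) * q x1 (bv v) := by
      rw [hq, Finset.mul_sum]
      refine Finset.sum_congr rfl fun x2 _ => ?_
      rw [hPx x2]
      by_cases h : deor A x1 x2 = v
      · rw [if_pos h, if_pos ((hcond x2).mp h)]; ring
      · rw [if_neg h, if_neg (fun hh => h ((hcond x2).mpr hh))]; ring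
    rw [this, hgdef]
    have hp1W : ((2:ℝ)^m)⁻¹ * p1 x1 = (p1 x1 / W) * (((2:ℝ)^m)⁻¹ * W) := by
      field_simp
    rw [hp1W]; ring
  -- Fourier coefficients
  set F : V m → BS n → ℝ :=
    fun u x1 => ∑ x2, p2 x2 * ee u (bv (deor A x1 x2)) with hF
  have hFTq : ∀ x1 u, FT (q x1) u = F u x1 := by
    intro x1 u
    rw [FT]
    simp only [hq, hF]
    simp only [Finset.mul_sum]
    rw [Finset.sum_comm]
    refine Finset.sum_congr rfl fun x2 _ => ?_
    simp only [mul_ite, mul_zero]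
    rw [Finset.sum_ite_eq Finset.univ (bv (deor A x1 x2))
      (fun w => ee u w * p2 x2)]
    simp [mul_comm]
  -- per x1 : ℓ¹ bound on g via Cauchy-Schwarz + Parseval
  have hx1bound : ∀ x1, ∑ v : BS m, |(∑ x2, if deor A x1 x2 = v then P x1 x2 else 0)
        - ((2:ℝ)^m)⁻¹ * p1 x1|
      ≤ (p1 x1 / W) * Real.sqrt (∑ u ∈ Finset.univ.erase (0 : V m), (F u x1)^2) := by
    intro x1
    have h1 : ∀ v : BS m, |(∑ x2, if deor A x1 x2 = v then P x1 x2 else 0)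
        - ((2:ℝ)^m)⁻¹ * p1 x1| = (p1 x1 / W) * |g x1 (bv v)| := by
      intro v
      rw [hterm x1 v, abs_mul, abs_of_nonneg (div_nonneg (hp1 x1) hW.le)]
    simp only [h1]
    rw [← Finset.mul_sum]
    refine mul_le_mul_of_nonneg_left ?_ (div_nonneg (hp1 x1) hW.le)
    -- ∑_{v : BS m} |g (bv v)| = ∑_{u : V m} |g u|
    have h2 : ∑ v : BS m, |g x1 (bv v)| = ∑ u : V m, |g x1 u| :=
      Fintype.sum_equiv (bvE m) _ _ (fun v => rfl)
    rw [h2]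
    -- Cauchy-Schwarz
    have h3 : ∑ u : V m, |g x1 u| ≤
        Real.sqrt ((2:ℝ)^m) * Real.sqrt (∑ u : V m, (g x1 u)^2) := by
      have hC := Real.sum_mul_le_sqrt_mul_sqrt Finset.univ (fun _ : V m => (1:ℝ))
        (fun u => |g x1 u|)
      simp only [one_mul, one_pow, sq_abs] at hC
      have hcard : (∑ _u : V m, (1:ℝ)) = (2:ℝ)^m := by
        rw [Finset.sum_const, Finset.card_univ, nsmul_eq_mul, mul_one]
        simp [Fintype.card_fun]
      rw [hcard] at hC
      exact hC
    -- Parseval / dev_sq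
    have h4 : ∑ u : V m, (g x1 u)^2
        = ((2:ℝ)^m)⁻¹ * ∑ u ∈ Finset.univ.erase (0 : V m), (F u x1)^2 := by
      have hgq : ∀ u, g x1 u = q x1 u - (∑ w, q x1 w) / (2:ℝ)^m := by
        intro u
        rw [hgdef, hsumq x1]
        ring_nf
      calc ∑ u : V m, (g x1 u)^2 = ∑ u : V m, (q x1 u - (∑ w, q x1 w) / (2:ℝ)^m)^2 :=
            Finset.sum_congr rfl fun u _ => by rw [hgq u]
        _ = ((2:ℝ)^m)⁻¹ * ∑ u ∈ Finset.univ.erase (0 : V m), (FT (q x1) u)^2 := dev_sq _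
        _ = _ := by
            congr 1
            exact Finset.sum_congr rfl fun u _ => by rw [hFTq x1 u]
    rw [h4] at h3
    calc ∑ u : V m, |g x1 u| ≤ _ := h3
      _ = Real.sqrt ((2:ℝ)^m * (((2:ℝ)^m)⁻¹ *
            ∑ u ∈ Finset.univ.erase (0 : V m), (F u x1)^2)) :=
          (Real.sqrt_mul (by positivity) _).symm
      _ = _ := by
          rw [← mul_assoc, mul_inv_cancel₀ (by positivity : ((2:ℝ)^m) ≠ 0), one_mul]
  -- sum the per-x1 bounds and apply Cauchy-Schwarz over x1
  have hstep : ∑ x1, ∑ v : BS m, |(∑ x2, if deor A x1 x2 = v then P x1 x2 else 0)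
        - ((2:ℝ)^m)⁻¹ * p1 x1|
      ≤ (1/W) * (Real.sqrt (∑ x1, (p1 x1)^2) *
          Real.sqrt (∑ x1, ∑ u ∈ Finset.univ.erase (0 : V m), (F u x1)^2)) := by
    calc ∑ x1, ∑ v : BS m, |(∑ x2, if deor A x1 x2 = v then P x1 x2 else 0)
          - ((2:ℝ)^m)⁻¹ * p1 x1|
        ≤ ∑ x1, (p1 x1 / W) * Real.sqrt (∑ u ∈ Finset.univ.erase (0 : V m), (F u x1)^2) :=
          Finset.sum_le_sum fun x1 _ => hx1bound x1
      _ = (1/W) * ∑ x1, p1 x1 * Real.sqrt (∑ u ∈ Finset.univ.erase (0 : V m), (F u x1)^2) := by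
          rw [Finset.mul_sum]
          exact Finset.sum_congr rfl fun x1 _ => by ring
      _ ≤ _ := by
          refine mul_le_mul_of_nonneg_left ?_ (by positivity)
          have := Real.sum_mul_le_sqrt_mul_sqrt Finset.univ (fun x1 => p1 x1)
            (fun x1 => Real.sqrt (∑ u ∈ Finset.univ.erase (0 : V m), (F u x1)^2))
          calc ∑ x1, p1 x1 * Real.sqrt (∑ u ∈ Finset.univ.erase (0 : V m), (F u x1)^2)
              ≤ _ := this
            _ ≤ _ := by
                refine mul_le_mul_of_nonneg_left ?_ (Real.sqrt_nonneg _)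
                refine Real.sqrt_le_sqrt (Finset.sum_le_sum fun x1 _ => ?_)
                rw [Real.sq_sqrt (Finset.sum_nonneg fun u _ => sq_nonneg _)]
  -- bound ∑ p1², and the Fourier mass
  have hbp1 : ∑ x1, (p1 x1)^2 ≤ M1 * W := by
    rw [← hW1, Finset.mul_sum]
    exact Finset.sum_le_sum fun x1 _ => by
      rw [sq]
      exact mul_le_mul_of_nonneg_right (hM1 x1) (hp1 x1)
  have hbF : ∑ x1, ∑ u ∈ Finset.univ.erase (0 : V m), (F u x1)^2
      ≤ (2:ℝ)^m * ((2:ℝ)^r * ((2:ℝ)^n * (M2 * W))) := by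
    rw [Finset.sum_comm]
    -- for each u ≠ 0
    have hu : ∀ u ∈ Finset.univ.erase (0 : V m),
        ∑ x1, (F u x1)^2 ≤ (2:ℝ)^r * ((2:ℝ)^n * (M2 * W)) := by
      intro u hu0
      have hune : u ≠ 0 := Finset.ne_of_mem_erase hu0
      set B : Matrix (Fin n) (Fin n) (ZMod 2) := ∑ i, u i • A i with hB
      have hrank : n - r ≤ B.rank := by
        have hvb : (vb u) ≠ (fun _ => false) := by
          intro h
          apply hune
          have := congrArg bv h
          rw [bv_vb] at this
          rw [this]
          funext i
          simp [bv, toZ2]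
        have := hA (vb u) hvb
        have heq : (∑ i, toZ2 ((vb u) i) • A i) = B := by
          rw [hB]
          refine Finset.sum_congr rfl fun i _ => ?_
          congr 1
          exact toZ2_decide (u i)
        rwa [heq] at this
      set H : V n → ℝ := fun y => ∑ x2, p2 x2 * ee y (bv x2) with hH
      have hFH : ∀ x1, F u x1 = H (B.mulVec (bv x1)) := by
        intro x1
        rw [hF, hH]
        refine Finset.sum_congr rfl fun x2 _ => ?_
        rw [ee_deor A u x1 x2]
      calc ∑ x1 : BS n, (F u x1)^2
          = ∑ x : V n, (H (B.mulVec x))^2 := by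
            refine Fintype.sum_equiv (bvE n) _ _ fun x1 => ?_
            rw [hFH x1]; rfl
        _ ≤ (2:ℝ)^r * ∑ y : V n, (H y)^2 :=
            sum_comp_mulVec_le B hrank (fun y => (H y)^2) (fun y => sq_nonneg _)
        _ ≤ (2:ℝ)^r * ((2:ℝ)^n * (M2 * W)) := by
            refine mul_le_mul_of_nonneg_left ?_ (by positivity)
            -- Parseval for p2
            have hHFT : ∀ y, H y = FT (fun w : V n => p2 (vb w)) y := by
              intro y
              rw [hH, FT]
              refine Fintype.sum_equiv (bvE n) _ _ fun x2 => ?_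
              simp only [bvE, Equiv.coe_fn_mk, vb_bv]
              ring
            calc ∑ y : V n, (H y)^2 = ∑ y : V n, (FT (fun w : V n => p2 (vb w)) y)^2 :=
                  Finset.sum_congr rfl fun y _ => by rw [hHFT y]
              _ = (2:ℝ)^n * ∑ w : V n, (p2 (vb w))^2 := parseval _
              _ ≤ (2:ℝ)^n * (M2 * W) := by
                  refine mul_le_mul_of_nonneg_left ?_ (by positivity)
                  have : ∑ w : V n, (p2 (vb w))^2 = ∑ x2 : BS n, (p2 x2)^2 :=
                    (Fintype.sum_equiv (bvE n).symm _ _ fun w => rfl)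
                  rw [this, ← hW2, Finset.mul_sum]
                  exact Finset.sum_le_sum fun x2 _ => by
                    rw [sq]
                    exact mul_le_mul_of_nonneg_right (hM2 x2) (hp2 x2)
    calc ∑ u ∈ Finset.univ.erase (0 : V m), ∑ x1, (F u x1)^2
        ≤ (Finset.univ.erase (0 : V m)).card • ((2:ℝ)^r * ((2:ℝ)^n * (M2 * W))) :=
          Finset.sum_le_card_nsmul _ _ _ hu
      _ ≤ _ := by
          rw [nsmul_eq_mul]
          refine mul_le_mul_of_nonneg_right ?_ (by positivity)
          calc ((Finset.univ.erase (0 : V m)).card : ℝ)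
              ≤ (Finset.univ : Finset (V m)).card :=
                Nat.cast_le.mpr (Finset.card_le_card (Finset.erase_subset _ _))
            _ = (2:ℝ)^m := by
                rw [Finset.card_univ]
                simp [Fintype.card_fun]
  -- put everything together
  calc ∑ x1, ∑ v : BS m, |(∑ x2, if deor A x1 x2 = v then P x1 x2 else 0)
        - ((2:ℝ)^m)⁻¹ * p1 x1|
      ≤ (1/W) * (Real.sqrt (∑ x1, (p1 x1)^2) *
          Real.sqrt (∑ x1, ∑ u ∈ Finset.univ.erase (0 : V m), (F u x1)^2)) := hstep
    _ ≤ (1/W) * (Real.sqrt (M1 * W) *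
          Real.sqrt ((2:ℝ)^m * ((2:ℝ)^r * ((2:ℝ)^n * (M2 * W))))) := by
        refine mul_le_mul_of_nonneg_left
          (mul_le_mul (Real.sqrt_le_sqrt hbp1) (Real.sqrt_le_sqrt hbF)
            (Real.sqrt_nonneg _) (Real.sqrt_nonneg _)) (by positivity)
    _ = Real.sqrt ((2:ℝ)^(n+r+m) * (M1 * M2)) := by
        rw [← Real.sqrt_mul (by positivity)]
        have harg : M1 * W * ((2:ℝ)^m * ((2:ℝ)^r * ((2:ℝ)^n * (M2 * W))))
            = ((2:ℝ)^(n+r+m) * (M1 * M2)) * W^2 := by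
          rw [pow_add, pow_add]
          ring
        rw [harg, Real.sqrt_mul (by positivity), Real.sqrt_sq hW.le]
        field_simp

set_option maxHeartbeats 1000000 in
theorem stmt3 {n m r : ℕ} (A : Fin m → Matrix (Fin n) (Fin n) (ZMod 2))
    (hA : ∀ s : BS m, s ≠ (fun _ => false) → n - r ≤ (∑ i, toZ2 (s i) • A i).rank)
    (k1 k2 : ℝ) :
    IsStrongExtCMarkov n n m (deor A) k1 k2
      (3 * (2:ℝ) ^ (-(k1 + k2 + 2 - (n:ℝ) - (r:ℝ) - (m:ℝ))/4)) := by
  intro C _ P hP hMark hk1 hk2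
  classical
  set P1 : BS n → C → ℝ := fun x1 c => ∑ x2, P x1 x2 c with hP1def
  set P2 : BS n → C → ℝ := fun x2 c => ∑ x1, P x1 x2 c with hP2def
  set Wc : C → ℝ := fun c => ∑ x1, ∑ x2, P x1 x2 c with hWcdef
  set M1 : C → ℝ := fun c => ⨆ x1, P1 x1 c with hM1def
  set M2 : C → ℝ := fun c => ⨆ x2, P2 x2 c with hM2def
  have hPnn : ∀ x1 x2 c, 0 ≤ P x1 x2 c := fun x1 x2 c => hP.1 (x1, x2, c)
  have hP1nn : ∀ x1 c, 0 ≤ P1 x1 c :=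
    fun x1 c => Finset.sum_nonneg fun x2 _ => hPnn _ _ _
  have hP2nn : ∀ x2 c, 0 ≤ P2 x2 c :=
    fun x2 c => Finset.sum_nonneg fun x1 _ => hPnn _ _ _
  have hWnn : ∀ c, 0 ≤ Wc c :=
    fun c => Finset.sum_nonneg fun x1 _ => hP1nn x1 c
  have hM1le : ∀ c x1, P1 x1 c ≤ M1 c := by
    intro c x1
    simp only [hM1def]
    exact le_ciSup (f := fun x1 => P1 x1 c) (Set.Finite.bddAbove (Set.finite_range _)) x1
  have hM2le : ∀ c x2, P2 x2 c ≤ M2 c := by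
    intro c x2
    simp only [hM2def]
    exact le_ciSup (f := fun x2 => P2 x2 c) (Set.Finite.bddAbove (Set.finite_range _)) x2
  have hM1nn : ∀ c, 0 ≤ M1 c :=
    fun c => le_trans (hP1nn (fun _ => false) c) (hM1le c _)
  have hM2nn : ∀ c, 0 ≤ M2 c :=
    fun c => le_trans (hP2nn (fun _ => false) c) (hM2le c _)
  have hcardBS : ∀ k : ℕ, (Finset.univ : Finset (BS k)).card = 2^k := by
    intro k
    rw [Finset.card_univ]
    simp [Fintype.card_fun]
  -- total mass one
  have hsum1 : ∑ c, Wc c = 1 := by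
    have h2 := hP.2
    rw [Fintype.sum_prod_type] at h2
    calc ∑ c, Wc c = ∑ c, ∑ x1, ∑ x2, P x1 x2 c := rfl
      _ = ∑ x1, ∑ c, ∑ x2, P x1 x2 c := Finset.sum_comm
      _ = ∑ x1, ∑ x2, ∑ c, P x1 x2 c :=
          Finset.sum_congr rfl fun x1 _ => Finset.sum_comm
      _ = 1 := by
          rw [← h2]
          refine Finset.sum_congr rfl fun x1 _ => ?_
          rw [Fintype.sum_prod_type]
  -- positivity and bounds for the conditional max sums
  have hWleM1 : ∀ c, Wc c ≤ (2:ℝ)^n * M1 c := by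
    intro c
    calc Wc c = ∑ x1, P1 x1 c := rfl
      _ ≤ ∑ _x1 : BS n, M1 c := Finset.sum_le_sum fun x1 _ => hM1le c x1
      _ = (2:ℝ)^n * M1 c := by
          rw [Finset.sum_const, hcardBS, nsmul_eq_mul]
          push_cast
          ring
  have hWleM2 : ∀ c, Wc c ≤ (2:ℝ)^n * M2 c := by
    intro c
    calc Wc c = ∑ x2, P2 x2 c := Finset.sum_comm
      _ ≤ ∑ _x2 : BS n, M2 c := Finset.sum_le_sum fun x2 _ => hM2le c x2
      _ = (2:ℝ)^n * M2 c := by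
          rw [Finset.sum_const, hcardBS, nsmul_eq_mul]
          push_cast
          ring
  have hS1pos : 0 < ∑ c, M1 c := by
    have h1 : (1:ℝ) ≤ (2:ℝ)^n * ∑ c, M1 c := by
      rw [← hsum1, Finset.mul_sum]
      exact Finset.sum_le_sum fun c _ => hWleM1 c
    nlinarith [pow_pos (by norm_num : (0:ℝ) < 2) n,
      Finset.sum_nonneg (fun c (_ : c ∈ Finset.univ) => hM1nn c)]
  have hS2pos : 0 < ∑ c, M2 c := by
    have h1 : (1:ℝ) ≤ (2:ℝ)^n * ∑ c, M2 c := by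
      rw [← hsum1, Finset.mul_sum]
      exact Finset.sum_le_sum fun c _ => hWleM2 c
    nlinarith [pow_pos (by norm_num : (0:ℝ) < 2) n,
      Finset.sum_nonneg (fun c (_ : c ∈ Finset.univ) => hM2nn c)]
  have hS1 : ∑ c, M1 c ≤ (2:ℝ) ^ (-k1) := by
    rw [HminCond] at hk1
    exact (Real.logb_le_iff_le_rpow one_lt_two hS1pos).mp (by linarith)
  have hS2 : ∑ c, M2 c ≤ (2:ℝ) ^ (-k2) := by
    rw [HminCond] at hk2
    exact (Real.logb_le_iff_le_rpow one_lt_two hS2pos).mp (by linarith)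
  -- the per-c total variation contribution
  set D : C → ℝ := fun c => ∑ x1, ∑ v : BS m,
    |(∑ x2, if deor A x1 x2 = v then P x1 x2 c else 0) - ((2:ℝ)^m)⁻¹ * P1 x1 c| with hDdef
  rw [TV]
  have hsplit : ∑ q : BS m × BS n × C,
      |(∑ x2, if deor A q.2.1 x2 = q.1 then P q.2.1 x2 q.2.2 else 0)
        - ((2:ℝ)^m)⁻¹ * ∑ x2, P q.2.1 x2 q.2.2|
      = ∑ c, D c := by
    rw [Fintype.sum_prod_type]
    calc ∑ v : BS m, ∑ p : BS n × C,
          |(∑ x2, if deor A p.1 x2 = v then P p.1 x2 p.2 else 0)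
            - ((2:ℝ)^m)⁻¹ * ∑ x2, P p.1 x2 p.2|
        = ∑ v : BS m, ∑ x1, ∑ c,
          |(∑ x2, if deor A x1 x2 = v then P x1 x2 c else 0)
            - ((2:ℝ)^m)⁻¹ * P1 x1 c| :=
          Finset.sum_congr rfl fun v _ => by rw [Fintype.sum_prod_type]
      _ = ∑ x1, ∑ v : BS m, ∑ c,
          |(∑ x2, if deor A x1 x2 = v then P x1 x2 c else 0)
            - ((2:ℝ)^m)⁻¹ * P1 x1 c| := Finset.sum_comm
      _ = ∑ x1, ∑ c, ∑ v : BS m,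
          |(∑ x2, if deor A x1 x2 = v then P x1 x2 c else 0)
            - ((2:ℝ)^m)⁻¹ * P1 x1 c| :=
          Finset.sum_congr rfl fun x1 _ => Finset.sum_comm
      _ = ∑ c, D c := Finset.sum_comm
  rw [hsplit]
  -- global trivial bound : ∑ c, D c ≤ 2
  have hDtriv : ∑ c, D c ≤ 2 := by
    have hDc : ∀ c, D c ≤ 2 * Wc c := by
      intro c
      have hx1 : ∀ x1, ∑ v : BS m,
          |(∑ x2, if deor A x1 x2 = v then P x1 x2 c else 0)
            - ((2:ℝ)^m)⁻¹ * P1 x1 c| ≤ 2 * P1 x1 c := by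
        intro x1
        have habs : ∀ v : BS m,
            |(∑ x2, if deor A x1 x2 = v then P x1 x2 c else 0)
              - ((2:ℝ)^m)⁻¹ * P1 x1 c|
            ≤ (∑ x2, if deor A x1 x2 = v then P x1 x2 c else 0)
              + ((2:ℝ)^m)⁻¹ * P1 x1 c := by
          intro v
          have ha : 0 ≤ ∑ x2, if deor A x1 x2 = v then P x1 x2 c else 0 :=
            Finset.sum_nonneg fun x2 _ => by
              by_cases h : deor A x1 x2 = v <;> simp [h, hPnn]
          have hb : 0 ≤ ((2:ℝ)^m)⁻¹ * P1 x1 c := by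
            have := hP1nn x1 c
            positivity
          calc |(∑ x2, if deor A x1 x2 = v then P x1 x2 c else 0)
                - ((2:ℝ)^m)⁻¹ * P1 x1 c|
              ≤ |∑ x2, if deor A x1 x2 = v then P x1 x2 c else 0|
                + |((2:ℝ)^m)⁻¹ * P1 x1 c| := abs_sub _ _
            _ = _ := by rw [abs_of_nonneg ha, abs_of_nonneg hb]
        calc ∑ v : BS m, |(∑ x2, if deor A x1 x2 = v then P x1 x2 c else 0)
              - ((2:ℝ)^m)⁻¹ * P1 x1 c|
            ≤ ∑ v : BS m, ((∑ x2, if deor A x1 x2 = v then P x1 x2 c else 0)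
              + ((2:ℝ)^m)⁻¹ * P1 x1 c) := Finset.sum_le_sum fun v _ => habs v
          _ = (∑ v : BS m, ∑ x2, if deor A x1 x2 = v then P x1 x2 c else 0)
              + ∑ _v : BS m, ((2:ℝ)^m)⁻¹ * P1 x1 c := Finset.sum_add_distrib
          _ = P1 x1 c + P1 x1 c := by
              congr 1
              · rw [Finset.sum_comm]
                refine Finset.sum_congr rfl fun x2 _ => ?_
                rw [Finset.sum_ite_eq Finset.univ (deor A x1 x2) (fun _ => P x1 x2 c)]
                simp
              · rw [Finset.sum_const, hcardBS, nsmul_eq_mul]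
                push_cast
                field_simp
          _ = 2 * P1 x1 c := by ring
      calc D c ≤ ∑ x1, 2 * P1 x1 c := Finset.sum_le_sum fun x1 _ => hx1 x1
        _ = 2 * Wc c := by rw [← Finset.mul_sum]
    calc ∑ c, D c ≤ ∑ c, 2 * Wc c := Finset.sum_le_sum fun c _ => hDc c
      _ = 2 := by rw [← Finset.mul_sum, hsum1, mul_one]
  -- sharp per-c bound
  have hDle : ∀ c, D c ≤ Real.sqrt ((2:ℝ)^(n+r+m))
      * (Real.sqrt (M1 c) * Real.sqrt (M2 c)) := by
    intro c
    by_cases hw : Wc c = 0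
    · have hz : ∀ x1 x2, P x1 x2 c = 0 := by
        intro x1 x2
        have h1 : ∀ x1 ∈ (Finset.univ : Finset (BS n)), (0:ℝ) ≤ ∑ x2, P x1 x2 c :=
          fun x1 _ => hP1nn x1 c
        have h2 := (Finset.sum_eq_zero_iff_of_nonneg h1).mp hw x1 (Finset.mem_univ x1)
        have h3 : ∀ x2 ∈ (Finset.univ : Finset (BS n)), (0:ℝ) ≤ P x1 x2 c :=
          fun x2 _ => hPnn x1 x2 c
        exact (Finset.sum_eq_zero_iff_of_nonneg h3).mp h2 x2 (Finset.mem_univ x2)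
      have hD0 : D c = 0 := by
        rw [hDdef]
        refine Finset.sum_eq_zero fun x1 _ => Finset.sum_eq_zero fun v _ => ?_
        have h4 : P1 x1 c = 0 := Finset.sum_eq_zero fun x2 _ => hz x1 x2
        simp [hz, h4]
      rw [hD0]
      positivity
    · have hwpos : 0 < Wc c := lt_of_le_of_ne (hWnn c) (Ne.symm hw)
      have key := per_c_bound A hA (fun x1 x2 => P x1 x2 c)
        (fun x1 => P1 x1 c) (fun x2 => P2 x2 c) (Wc c) (M1 c) (M2 c)
        (fun x1 x2 => hMark x1 x2 c)
        (fun x1 => hP1nn x1 c) (fun x2 => hP2nn x2 c)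
        rfl Finset.sum_comm hwpos (fun x1 => hM1le c x1) (fun x2 => hM2le c x2)
      calc D c ≤ Real.sqrt ((2:ℝ)^(n+r+m) * (M1 c * M2 c)) := key
        _ = _ := by
            rw [Real.sqrt_mul (by positivity),
              Real.sqrt_mul (hM1nn c)]
  -- combine
  have hmain : (1/2 : ℝ) * ∑ c, D c ≤ (1/2) * (Real.sqrt ((2:ℝ)^(n+r+m))
      * (Real.sqrt ((2:ℝ) ^ (-k1)) * Real.sqrt ((2:ℝ) ^ (-k2)))) := by
    refine mul_le_mul_of_nonneg_left ?_ (by norm_num)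
    calc ∑ c, D c
        ≤ ∑ c, Real.sqrt ((2:ℝ)^(n+r+m)) * (Real.sqrt (M1 c) * Real.sqrt (M2 c)) :=
          Finset.sum_le_sum fun c _ => hDle c
      _ = Real.sqrt ((2:ℝ)^(n+r+m)) * ∑ c, Real.sqrt (M1 c) * Real.sqrt (M2 c) := by
          rw [Finset.mul_sum]
      _ ≤ Real.sqrt ((2:ℝ)^(n+r+m)) * (Real.sqrt (∑ c, M1 c) * Real.sqrt (∑ c, M2 c)) := by
          refine mul_le_mul_of_nonneg_left ?_ (Real.sqrt_nonneg _)
          exact Real.sum_sqrt_mul_sqrt_le Finset.univ (fun c => hM1nn c) (fun c => hM2nn c)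
      _ ≤ _ := by
          refine mul_le_mul_of_nonneg_left ?_ (Real.sqrt_nonneg _)
          exact mul_le_mul (Real.sqrt_le_sqrt hS1) (Real.sqrt_le_sqrt hS2)
            (Real.sqrt_nonneg _) (Real.sqrt_nonneg _)
  -- arithmetic of the exponents
  set t : ℝ := (k1 + k2 + 2 - (n:ℝ) - (r:ℝ) - (m:ℝ))/4 with htdef
  have hεform : 3 * (2:ℝ) ^ (-(k1 + k2 + 2 - (n:ℝ) - (r:ℝ) - (m:ℝ))/4)
      = 3 * (2:ℝ) ^ (-t) := by rw [htdef]; ring_nf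
  have harith : (1/2 : ℝ) * (Real.sqrt ((2:ℝ)^(n+r+m))
      * (Real.sqrt ((2:ℝ) ^ (-k1)) * Real.sqrt ((2:ℝ) ^ (-k2)))) = (2:ℝ) ^ (-(2*t)) := by
    have h2 : ((2:ℝ)^(n+r+m) : ℝ) = (2:ℝ) ^ (((n+r+m : ℕ)) : ℝ) :=
      (Real.rpow_natCast 2 (n+r+m)).symm
    have hs : ∀ y : ℝ, Real.sqrt ((2:ℝ) ^ y) = (2:ℝ) ^ (y/2) := by
      intro y
      rw [Real.sqrt_eq_rpow, ← Real.rpow_mul (by norm_num), mul_one_div]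
    rw [h2, hs, hs, hs]
    rw [show (1/2 : ℝ) = (2:ℝ) ^ (-1 : ℝ) by
      rw [Real.rpow_neg_one]; norm_num]
    rw [← Real.rpow_add (by norm_num), ← Real.rpow_add (by norm_num),
      ← Real.rpow_add (by norm_num)]
    congr 1
    have hc : ((n+r+m : ℕ) : ℝ) = (n:ℝ) + (r:ℝ) + (m:ℝ) := by push_cast; ring
    rw [hc, htdef]
    ring
  rw [hεform]
  rcases le_or_gt 0 t with ht | ht
  · calc (1/2 : ℝ) * ∑ c, D c ≤ (2:ℝ) ^ (-(2*t)) := by rw [← harith]; exact hmain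
      _ ≤ (2:ℝ) ^ (-t) := by
          apply Real.rpow_le_rpow_left_iff (by norm_num : (1:ℝ) < 2) |>.mpr
          linarith
      _ ≤ 3 * (2:ℝ) ^ (-t) := by
          have := Real.rpow_pos_of_pos (by norm_num : (0:ℝ) < 2) (-t)
          linarith
  · have h1 : (1:ℝ) ≤ (2:ℝ) ^ (-t) := by
      have h0 : (2:ℝ) ^ (0:ℝ) ≤ (2:ℝ) ^ (-t) := by
        apply Real.rpow_le_rpow_left_iff (by norm_num : (1:ℝ) < 2) |>.mpr
        linarith
      rwa [Real.rpow_zero] at h0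
    calc (1/2 : ℝ) * ∑ c, D c ≤ (1/2) * 2 :=
          mul_le_mul_of_nonneg_left hDtriv (by norm_num)
      _ = 1 := by norm_num
      _ ≤ 3 * (2:ℝ) ^ (-t) := by linarith
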